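/- For every ρ > 0, every real t, and every positive integer k, |ρ e^{ikt} − 1| ≤ k |ρ e^{it} − 1|. -/

import Mathlib

open Complex

private lemma my_sq_le (a b : ℝ) (ha : 0 ≤ a) (hb : 0 ≤ b) (h : a^2 ≤ b^2) : a ≤ b := by
  nlinarith

private lemma key1 (ρ : ℝ) (hρ : 0 < ρ) (hρ1 : ρ ≤ 1) (t : ℝ) :
    ρ * ‖Complex.exp (t * Complex.I) - 1‖
      ≤ ‖(ρ : ℂ) * Complex.exp (t * Complex.I) - 1‖ := by
  apply my_sq_le _ _ (by positivity) (by positivity)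
  rw [mul_pow, Complex.sq_norm, Complex.sq_norm]
  simp only [Complex.normSq_apply, Complex.sub_re, Complex.sub_im, Complex.mul_re,
    Complex.mul_im, Complex.ofReal_re, Complex.ofReal_im, Complex.one_re, Complex.one_im,
    Complex.exp_ofReal_mul_I_re, Complex.exp_ofReal_mul_I_im]
  have h := Real.sin_sq_add_cos_sq t
  have hc := Real.cos_le_one t
  have h2 : 0 ≤ 1 + ρ - 2 * ρ * Real.cos t := by nlinarith
  nlinarith [mul_nonneg (sub_nonneg.2 hρ1) h2]

private lemma key2 (ρ : ℝ) (hρ1 : 1 ≤ ρ) (t : ℝ) :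
    ‖Complex.exp (t * Complex.I) - 1‖
      ≤ ‖(ρ : ℂ) * Complex.exp (t * Complex.I) - 1‖ := by
  apply my_sq_le _ _ (by positivity) (by positivity)
  rw [Complex.sq_norm, Complex.sq_norm]
  simp only [Complex.normSq_apply, Complex.sub_re, Complex.sub_im, Complex.mul_re,
    Complex.mul_im, Complex.ofReal_re, Complex.ofReal_im, Complex.one_re, Complex.one_im,
    Complex.exp_ofReal_mul_I_re, Complex.exp_ofReal_mul_I_im]
  have h := Real.sin_sq_add_cos_sq t
  have hc := Real.cos_le_one t
  have h2 : 0 ≤ ρ + 1 - 2 * Real.cos t := by nlinarith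
  have h3 : (ρ ^ 2 - 1) * (Real.sin t ^ 2 + Real.cos t ^ 2) = ρ ^ 2 - 1 := by rw [h]; ring
  nlinarith [mul_nonneg (sub_nonneg.2 hρ1) h2, h3]

private lemma absE (t : ℝ) : ‖Complex.exp (t * Complex.I)‖ = 1 :=
  Complex.norm_exp_ofReal_mul_I t

private lemma unit_pow (t : ℝ) (k : ℕ) :
    ‖Complex.exp (t * Complex.I) ^ k - 1‖
      ≤ k * ‖Complex.exp (t * Complex.I) - 1‖ := by
  induction k with
  | zero => simp
  | succ n ih =>
    set E := Complex.exp (t * Complex.I) with hE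
    have hdec : E ^ (n + 1) - 1 = E ^ n * (E - 1) + (E ^ n - 1) := by ring
    calc ‖E ^ (n + 1) - 1‖
        ≤ ‖E ^ n * (E - 1)‖ + ‖E ^ n - 1‖ := by
          rw [hdec]; exact norm_add_le _ _
      _ = ‖E - 1‖ + ‖E ^ n - 1‖ := by
          rw [norm_mul, norm_pow, absE, one_pow, one_mul]
      _ ≤ ‖E - 1‖ + n * ‖E - 1‖ := by linarith
      _ = (n + 1 : ℕ) * ‖E - 1‖ := by push_cast; ring

theorem exp_power_ineq (ρ : ℝ) (hρ : 0 < ρ) (t : ℝ) (k : ℕ) (hk : 1 ≤ k) :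
    ‖(ρ : ℂ) * Complex.exp ((k : ℝ) * t * Complex.I) - 1‖
      ≤ k * ‖(ρ : ℂ) * Complex.exp (t * Complex.I) - 1‖ := by
  set E := Complex.exp (t * Complex.I) with hE
  have hpow : Complex.exp ((k : ℝ) * t * Complex.I) = E ^ k := by
    rw [hE, ← Complex.exp_nat_mul]
    push_cast
    ring_nf
  rw [hpow]
  clear hpow
  induction k, hk using Nat.le_induction with
  | base => simp
  | succ n hn ih =>
    have hdec1 : (ρ : ℂ) * E ^ (n + 1) - 1 =
        (ρ : ℂ) * E ^ n * (E - 1) + ((ρ : ℂ) * E ^ n - 1) := by ring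
    have hdec2 : (ρ : ℂ) * E ^ (n + 1) - 1 =
        E ^ n * ((ρ : ℂ) * E - 1) + (E ^ n - 1) := by ring
    rcases le_total ρ 1 with h1 | h1
    · calc ‖(ρ : ℂ) * E ^ (n + 1) - 1‖
          ≤ ‖(ρ : ℂ) * E ^ n * (E - 1)‖ + ‖(ρ : ℂ) * E ^ n - 1‖ := by
            rw [hdec1]; exact norm_add_le _ _
        _ = ρ * ‖E - 1‖ + ‖(ρ : ℂ) * E ^ n - 1‖ := by
            rw [norm_mul, norm_mul, norm_pow, hE, absE, one_pow, mul_one,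
              Complex.norm_real, Real.norm_eq_abs, abs_of_pos hρ]
        _ ≤ ‖(ρ : ℂ) * E - 1‖ + n * ‖(ρ : ℂ) * E - 1‖ := by
            have := key1 ρ hρ h1 t
            rw [← hE] at this
            linarith
        _ = (n + 1 : ℕ) * ‖(ρ : ℂ) * E - 1‖ := by push_cast; ring
    · calc ‖(ρ : ℂ) * E ^ (n + 1) - 1‖
          ≤ ‖E ^ n * ((ρ : ℂ) * E - 1)‖ + ‖E ^ n - 1‖ := by
            rw [hdec2]; exact norm_add_le _ _
        _ = ‖(ρ : ℂ) * E - 1‖ + ‖E ^ n - 1‖ := by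
            rw [norm_mul, norm_pow, hE, absE, one_pow, one_mul]
        _ ≤ ‖(ρ : ℂ) * E - 1‖ + n * ‖(ρ : ℂ) * E - 1‖ := by
            have h2 := unit_pow t n
            have h3 := key2 ρ h1 t
            rw [← hE] at h2 h3
            nlinarith [norm_nonneg (E ^ n - 1), Nat.cast_nonneg (α := ℝ) n]
        _ = (n + 1 : ℕ) * ‖(ρ : ℂ) * E - 1‖ := by push_cast; ring
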